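/- Let (X, T) and (Y, S) be topological dynamical systems and f ∈ C(X × Y). If (X, T) has the specification property, then δ(f) ≥ γ(f). -/

import Mathlib

open MeasureTheory Filter Topology
open scoped ENNReal NNReal

noncomputable section

/-- Birkhoff average `A_k f(x, y) = (1/k) Σ_{j<k} f(T^j x, S^j y)`. -/
def birk2 {X Y : Type*} (T : X → X) (S : Y → Y) (f : X × Y → ℝ) (k : ℕ) (x : X) (y : Y) : ℝ :=
  (k : ℝ)⁻¹ * ∑ j ∈ Finset.range k, f ((Prod.map T S)^[j] (x, y))

/-- The set of invariant Borel probability measures of a map. -/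
def invMeas {Z : Type*} [MeasurableSpace Z] (U : Z → Z) : Set (ProbabilityMeasure Z) :=
  {μ | μ.toMeasure.map U = μ.toMeasure}

/-- `ψ_f(ν) = min { ∫ f dλ : λ ∈ M_{T×S}(X × Y), (π_Y)_* λ = ν }`. -/
def psi2 {X Y : Type*} [MeasurableSpace X] [MeasurableSpace Y]
    (T : X → X) (S : Y → Y) (f : X × Y → ℝ) (ν : ProbabilityMeasure Y) : ℝ :=
  sInf {r | ∃ lam ∈ invMeas (Prod.map T S), lam.toMeasure.map Prod.snd = ν.toMeasure ∧
    r = ∫ p, f p ∂lam.toMeasure}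

/-- `α(f) = sup_{ν ∈ M_S(Y)} ψ_f(ν)`. -/
def alpha2 {X Y : Type*} [MeasurableSpace X] [MeasurableSpace Y]
    (T : X → X) (S : Y → Y) (f : X × Y → ℝ) : ℝ :=
  sSup {r | ∃ ν ∈ invMeas S, r = psi2 T S f ν}

/-- `R_f`: points `(x, y)` whose Birkhoff averages converge. -/
def reg2 {X Y : Type*} (T : X → X) (S : Y → Y) (f : X × Y → ℝ) : Set (X × Y) :=
  {p | ∃ L : ℝ, Tendsto (fun k : ℕ => birk2 T S f k p.1 p.2) atTop (𝓝 L)}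

/-- `β(f) = sup_{y ∈ π_Y(R_f)} inf_{(x,y) ∈ R_f} lim_k A_k f(x, y)`. -/
def beta2 {X Y : Type*} (T : X → X) (S : Y → Y) (f : X × Y → ℝ) : ℝ :=
  sSup {r | ∃ y : Y, (∃ x : X, (x, y) ∈ reg2 T S f) ∧
    r = sInf {L | ∃ x : X, (x, y) ∈ reg2 T S f ∧
      Tendsto (fun k : ℕ => birk2 T S f k x y) atTop (𝓝 L)}}

/-- `γ(f) = sup_{y ∈ Y} inf_{x ∈ X} limsup_k A_k f(x, y)`. -/
def gamma2 {X Y : Type*} (T : X → X) (S : Y → Y) (f : X × Y → ℝ) : ℝ :=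
  ⨆ y : Y, ⨅ x : X, limsup (fun k : ℕ => birk2 T S f k x y) atTop

/-- `δ(f) = limsup_k max_{y ∈ Y} min_{x ∈ X} A_k f(x, y)`. -/
def delta2 {X Y : Type*} (T : X → X) (S : Y → Y) (f : X × Y → ℝ) : ℝ :=
  limsup (fun k : ℕ => ⨆ y : Y, ⨅ x : X, birk2 T S f k x y) atTop

/-- The invariant probability measures supported on a single closed (periodic) orbit. -/
def Mco {Z : Type*} [MeasurableSpace Z] (U : Z → Z) : Set (ProbabilityMeasure Z) :=
  {μ | ∃ (k : ℕ) (z : Z), 0 < k ∧ U^[k] z = z ∧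
    μ.toMeasure = (k : ℝ≥0∞)⁻¹ • ∑ j ∈ Finset.range k, Measure.dirac (U^[j] z)}

/-- `α_per(f)`: as `α(f)`, but with both measures ranging over closed-orbit measures. -/
def alphaPer2 {X Y : Type*} [MeasurableSpace X] [MeasurableSpace Y]
    (T : X → X) (S : Y → Y) (f : X × Y → ℝ) : ℝ :=
  sSup {r | ∃ ν ∈ Mco S,
    r = sInf {t | ∃ lam ∈ Mco (Prod.map T S), lam.toMeasure.map Prod.snd = ν.toMeasure ∧
      t = ∫ p, f p ∂lam.toMeasure}}

/-- The set of periodic points. -/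
def perPts {Z : Type*} (U : Z → Z) : Set Z :=
  {z | ∃ t : ℕ, 0 < t ∧ U^[t] z = z}

/-- `δ_per(f) = limsup_k sup_{y ∈ Per_S(Y)} inf_{x ∈ Per_T(X)} A_k f(x, y)`. -/
def deltaPer2 {X Y : Type*} (T : X → X) (S : Y → Y) (f : X × Y → ℝ) : ℝ :=
  limsup (fun k : ℕ => sSup {r | ∃ y ∈ perPts S,
    r = sInf {t | ∃ x ∈ perPts T, t = birk2 T S f k x y}}) atTop

/-- The `j`-th power (`j : ℤ`) of a homeomorphism, applied to a point. -/
def zit {X : Type*} [TopologicalSpace X] (T : X ≃ₜ X) (j : ℤ) (x : X) : X :=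
  (T.toEquiv ^ j) x

/-- The specification property for `(X, T)` (with respect to the metric of `X`):
for every `η > 0` there is `D = D(η)` such that every `D`-spaced specification
`ξ = (x_i, [a_i, b_i])_{i=1}^n` admits an `η`-tracing point. -/
def SpecProp {X : Type*} [MetricSpace X] (T : X ≃ₜ X) : Prop :=
  ∀ η : ℝ, 0 < η → ∃ D : ℕ, 0 < D ∧
    ∀ (n : ℕ) (x : Fin (n + 1) → X) (a b : Fin (n + 1) → ℤ),
      (∀ i, a i ≤ b i) →
      (∀ i : Fin n, (D : ℤ) ≤ a i.succ - b i.castSucc) →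
      ∃ x' : X, ∀ i : Fin (n + 1), ∀ j : ℤ, a i ≤ j → j ≤ b i →
        dist (zit T j x') (zit T j (x i)) < η

/-- The periodic specification property for `(X, T)`: as `SpecProp`, but the tracing
point can moreover be chosen of period `b_n - a_1 + D`. -/
def PerSpecProp {X : Type*} [MetricSpace X] (T : X ≃ₜ X) : Prop :=
  ∀ η : ℝ, 0 < η → ∃ D : ℕ, 0 < D ∧
    ∀ (n : ℕ) (x : Fin (n + 1) → X) (a b : Fin (n + 1) → ℤ),
      (∀ i, a i ≤ b i) →
      (∀ i : Fin n, (D : ℤ) ≤ a i.succ - b i.castSucc) →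
      ∃ x' : X, (∀ i : Fin (n + 1), ∀ j : ℤ, a i ≤ j → j ≤ b i →
          dist (zit T j x') (zit T j (x i)) < η) ∧
        zit T (b (Fin.last n) - a 0 + (D : ℤ)) x' = x'

lemma zit_add {X : Type*} [TopologicalSpace X] (T : X ≃ₜ X) (p q : ℤ) (x : X) :
    zit T p (zit T q x) = zit T (p + q) x := by
  simp [zit, zpow_add, Equiv.Perm.mul_apply]

lemma zit_natCast {X : Type*} [TopologicalSpace X] (T : X ≃ₜ X) (n : ℕ) (x : X) :
    zit T (n : ℤ) x = (⇑T)^[n] x := by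
  simp only [zit, zpow_natCast]
  rw [← Equiv.Perm.iterate_eq_pow]
  rfl

lemma birk2_apply {X Y : Type*} (T : X → X) (S : Y → Y) (f : X × Y → ℝ) (k : ℕ) (x : X) (y : Y) :
    birk2 T S f k x y = (k : ℝ)⁻¹ * ∑ j ∈ Finset.range k, f (T^[j] x, S^[j] y) := by
  simp [birk2, Prod.map_iterate]

/-- if `(X, T)` has the specification property, then `δ(f) ≥ γ(f)`. -/
theorem stmt16
    {X Y : Type*}
    [MetricSpace X] [CompactSpace X] [Nonempty X]
    [MetricSpace Y] [CompactSpace Y] [Nonempty Y]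
    (T : X ≃ₜ X) (S : Y ≃ₜ Y) (f : X × Y → ℝ) (hf : Continuous f)
    (hspecX : SpecProp T) :
    gamma2 (⇑T) (⇑S) f ≤ delta2 (⇑T) (⇑S) f := by
  -- uniform bound on f
  obtain ⟨C, hC1, hC⟩ : ∃ C : ℝ, 1 ≤ C ∧ ∀ p : X × Y, |f p| ≤ C := by
    obtain ⟨p0, -, hp0⟩ := isCompact_univ.exists_isMaxOn Set.univ_nonempty
      (hf.abs.continuousOn (s := Set.univ))
    exact ⟨max (|f p0|) 1, le_max_right _ _,
      fun p => le_trans (hp0 (Set.mem_univ p)) (le_max_left _ _)⟩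
  have hCpos : (0:ℝ) < C := lt_of_lt_of_le one_pos hC1
  -- bounds on birkhoff averages
  have habs : ∀ (k : ℕ) (x : X) (y : Y), |birk2 (⇑T) (⇑S) f k x y| ≤ C := by
    intro k x y
    rcases Nat.eq_zero_or_pos k with hk | hk
    · simp [hk, birk2, hCpos.le]
    · rw [birk2_apply, abs_mul, abs_inv, Nat.abs_cast]
      calc ((k:ℝ))⁻¹ * |∑ j ∈ Finset.range k, f ((⇑T)^[j] x, (⇑S)^[j] y)|
          ≤ (k:ℝ)⁻¹ * ∑ j ∈ Finset.range k, C := by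
            gcongr
            exact (Finset.abs_sum_le_sum_abs _ _).trans
              (Finset.sum_le_sum fun j _ => hC _)
        _ = C := by
            rw [Finset.sum_const, Finset.card_range, nsmul_eq_mul]
            field_simp
  have hble : ∀ (k : ℕ) (x : X) (y : Y), birk2 (⇑T) (⇑S) f k x y ≤ C :=
    fun k x y => (le_abs_self _).trans (habs k x y)
  have hbge : ∀ (k : ℕ) (x : X) (y : Y), -C ≤ birk2 (⇑T) (⇑S) f k x y :=
    fun k x y => neg_le_of_abs_le (habs k x y)
  -- boundedness facts for limsups
  have hBdd : ∀ (x : X) (y : Y),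
      IsBoundedUnder (· ≤ ·) atTop (fun k : ℕ => birk2 (⇑T) (⇑S) f k x y) :=
     fun x y => ⟨C, Filter.eventually_map.2 (Eventually.of_forall fun k => hble k x y)⟩
  have hCobdd : ∀ (x : X) (y : Y),
      IsCoboundedUnder (· ≤ ·) atTop (fun k : ℕ => birk2 (⇑T) (⇑S) f k x y) :=
    fun x y => IsBoundedUnder.isCoboundedUnder_le
      ⟨-C, Filter.eventually_map.2 (Eventually.of_forall fun k => hbge k x y)⟩
  have hlimsub_le : ∀ (x : X) (y : Y),
      limsup (fun k : ℕ => birk2 (⇑T) (⇑S) f k x y) atTop ≤ C :=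
    fun x y => limsup_le_of_le (hCobdd x y) (Eventually.of_forall fun k => hble k x y)
  have hlimsub_ge : ∀ (x : X) (y : Y),
      -C ≤ limsup (fun k : ℕ => birk2 (⇑T) (⇑S) f k x y) atTop :=
    fun x y => le_limsup_of_frequently_le
      (Frequently.of_forall fun k => hbge k x y) (hBdd x y)
  have hbddBelowLim : ∀ y : Y, BddBelow (Set.range fun x : X =>
      limsup (fun k : ℕ => birk2 (⇑T) (⇑S) f k x y) atTop) :=
    fun y => ⟨-C, by rintro r ⟨x, rfl⟩; exact hlimsub_ge x y⟩
  -- bounds on M k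
  set M : ℕ → ℝ := fun k => ⨆ y : Y, ⨅ x : X, birk2 (⇑T) (⇑S) f k x y with hM
  have hbddBelowB : ∀ (k : ℕ) (y : Y),
      BddBelow (Set.range fun x : X => birk2 (⇑T) (⇑S) f k x y) :=
    fun k y => ⟨-C, by rintro r ⟨x, rfl⟩; exact hbge k x y⟩
  have hMle : ∀ k : ℕ, M k ≤ C := by
    intro k
    refine ciSup_le fun y => ?_
    exact le_trans (ciInf_le (hbddBelowB k y) (Classical.arbitrary X))
      (hble k _ y)
  have hbddAboveI : ∀ k : ℕ, BddAbove (Set.range fun y : Y =>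
      ⨅ x : X, birk2 (⇑T) (⇑S) f k x y) := by
    intro k
    refine ⟨C, ?_⟩
    rintro r ⟨y', rfl⟩
    exact le_trans (ciInf_le (hbddBelowB k y') (Classical.arbitrary X)) (hble k _ y')
  have hMge : ∀ k : ℕ, -C ≤ M k := by
    intro k
    have h1 : -C ≤ ⨅ x : X, birk2 (⇑T) (⇑S) f k x (Classical.arbitrary Y) :=
      le_ciInf fun x => hbge k x _
    exact le_trans h1 (le_ciSup (f := fun y : Y => ⨅ x : X, birk2 (⇑T) (⇑S) f k x y)
      (hbddAboveI k) (Classical.arbitrary Y))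
  have hMBdd : IsBoundedUnder (· ≤ ·) atTop M :=
    ⟨C, Filter.eventually_map.2 (Eventually.of_forall hMle)⟩
  have hdelta_ge : -C ≤ delta2 (⇑T) (⇑S) f :=
    le_limsup_of_frequently_le (Frequently.of_forall hMge) hMBdd
  have hgamma_le : gamma2 (⇑T) (⇑S) f ≤ C := by
    refine ciSup_le fun y => ?_
    exact le_trans (ciInf_le (hbddBelowLim y) (Classical.arbitrary X))
      (hlimsub_le _ y)
  -- main argument, by contradiction
  by_contra hcon
  push_neg at hcon
  set G := gamma2 (⇑T) (⇑S) f with hGdef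
  set Δ := delta2 (⇑T) (⇑S) f with hΔdef
  set ε : ℝ := (G - Δ) / 8 with hεdef
  have hε : 0 < ε := by simp only [hεdef]; linarith
  have hεC : ε ≤ C := by simp only [hεdef]; linarith
  -- choose y with all limsups large
  obtain ⟨y, hy'⟩ : ∃ y : Y, G - ε < ⨅ x : X,
      limsup (fun k : ℕ => birk2 (⇑T) (⇑S) f k x y) atTop := by
    have : G - ε < G := by linarith
    exact exists_lt_of_lt_ciSup this
  have hy : ∀ x : X, G - ε <
      limsup (fun k : ℕ => birk2 (⇑T) (⇑S) f k x y) atTop :=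
    fun x => lt_of_lt_of_le hy' (ciInf_le (hbddBelowLim y) x)
  -- eventually M k < Δ + ε
  obtain ⟨K0, hK0⟩ : ∃ K0 : ℕ, ∀ k ≥ K0, M k < Δ + ε := by
    have h1 : limsup M atTop < Δ + ε := by
      have : Δ < Δ + ε := by linarith
      exact this
    exact eventually_atTop.1 (eventually_lt_of_limsup_lt h1 hMBdd)
  have hbad : ∀ k ≥ K0, ∀ y' : Y, ∃ x : X, birk2 (⇑T) (⇑S) f k x y' < Δ + ε := by
    intro k hk y'
    have h1 : (⨅ x : X, birk2 (⇑T) (⇑S) f k x y') < Δ + ε := by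
      refine lt_of_le_of_lt ?_ (hK0 k hk)
      exact le_ciSup (f := fun y'' : Y => ⨅ x : X, birk2 (⇑T) (⇑S) f k x y'')
        (hbddAboveI k) y'
    exact exists_lt_of_ciInf_lt h1
  -- uniform continuity
  obtain ⟨η, hη, hηf⟩ : ∃ η > 0, ∀ p q : X × Y, dist p q < η → dist (f p) (f q) < ε :=
    Metric.uniformContinuous_iff.mp (CompactSpace.uniformContinuous_of_continuous hf) ε hε
  have hclose : ∀ (x1 x2 : X) (y' : Y), dist x1 x2 < η →
      f (x1, y') ≤ f (x2, y') + ε := by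
    intro x1 x2 y' hd
    have h1 : dist ((x1, y') : X × Y) (x2, y') < η := by
      rw [Prod.dist_eq]
      simp only [dist_self]
      exact max_lt hd hη
    have h2 := hηf _ _ h1
    rw [Real.dist_eq] at h2
    have := abs_lt.1 h2
    linarith [this.1, this.2]
  -- specification
  obtain ⟨D, hD, hspec⟩ := hspecX η hη
  have hΔleC : Δ ≤ C := limsup_le_of_le
    (IsBoundedUnder.isCoboundedUnder_le
      ⟨-C, Filter.eventually_map.2 (Eventually.of_forall hMge)⟩)
    (Eventually.of_forall hMle)
  -- choice of the block length k
  obtain ⟨k1, hk1⟩ := exists_nat_gt (5 * C * D / ε)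
  set k : ℕ := max (max K0 1) k1 with hkdef
  have hkK0 : K0 ≤ k := le_trans (le_max_left _ _) (le_max_left _ _)
  have hk_pos : 1 ≤ k := le_trans (le_max_right _ _) (le_max_left _ _)
  set N : ℕ := k + D with hNdef
  have hN_pos : 0 < N := by omega
  have hNR : (0:ℝ) < N := by exact_mod_cast hN_pos
  have hNcast : (N:ℝ) = k + D := by exact_mod_cast rfl
  have hkR : (1:ℝ) ≤ k := by exact_mod_cast hk_pos
  have hDR : (1:ℝ) ≤ D := by exact_mod_cast hD
  have h5CD : 5 * C * D < ε * N := by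
    have h1 : 5 * C * D / ε < N := by
      refine lt_of_lt_of_le hk1 ?_
      have : (k1:ℝ) ≤ k := by exact_mod_cast le_max_right _ _
      have hkN : (k:ℝ) ≤ N := by exact_mod_cast Nat.le_add_right k D
      linarith
    calc 5 * C * D = (5 * C * D / ε) * ε := by field_simp
      _ < (N:ℝ) * ε := by
          apply mul_lt_mul_of_pos_right h1 hε
      _ = ε * N := by ring
  clear_value M
  clear_value ε
  clear_value G
  clear_value Δ
  clear_value N
  clear_value k
  -- choose bad points for each block
  have hxiex : ∀ i : ℕ, ∃ x : X, birk2 (⇑T) (⇑S) f k x ((⇑S)^[i*N] y) < Δ + ε :=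
    fun i => hbad k hkK0 _
  choose xi hxi using hxiex
  -- specification tracing points
  have hx'ex : ∀ n : ℕ, ∃ x' : X, ∀ i : Fin (n+1), ∀ j : ℤ,
      ((i.val * N : ℕ) : ℤ) ≤ j → j ≤ ((i.val * N : ℕ) : ℤ) + (k:ℤ) - 1 →
      dist (zit T j x') (zit T j (zit T (-((i.val * N : ℕ) : ℤ)) (xi i.val))) < η := by
    intro n
    refine hspec n (fun i => zit T (-((i.val * N : ℕ) : ℤ)) (xi i.val))
      (fun i => ((i.val * N : ℕ) : ℤ)) (fun i => ((i.val * N : ℕ) : ℤ) + (k:ℤ) - 1) ?_ ?_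
    · intro i
      show ((i.val * N : ℕ) : ℤ) ≤ ((i.val * N : ℕ) : ℤ) + (k:ℤ) - 1
      have : (1:ℤ) ≤ (k:ℤ) := by exact_mod_cast hk_pos
      linarith
    · intro i
      have h1 : ((i.succ.val * N : ℕ) : ℤ) = ((i.castSucc.val * N : ℕ) : ℤ) + N := by
        push_cast [Fin.val_succ, Fin.coe_castSucc]
        ring
      have h2 : (N:ℤ) = (k:ℤ) + D := by exact_mod_cast hNcast
      show (D:ℤ) ≤ ((i.succ.val * N : ℕ) : ℤ) - (((i.castSucc.val * N : ℕ) : ℤ) + (k:ℤ) - 1)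
      rw [h1]
      have : (1:ℤ) ≤ (k:ℤ) := by exact_mod_cast hk_pos
      linarith
  choose x' htrace using hx'ex
  -- translate tracing into iterate language
  have htrace' : ∀ (n i r : ℕ), i ≤ n → r < k →
      dist ((⇑T)^[i*N + r] (x' n)) ((⇑T)^[r] (xi i)) < η := by
    intro n i r hi hr
    have hlo : ((i * N : ℕ) : ℤ) ≤ ((i*N + r : ℕ) : ℤ) := by
      push_cast; linarith [Int.natCast_nonneg r]
    have hhi : ((i*N + r : ℕ) : ℤ) ≤ ((i * N : ℕ) : ℤ) + (k:ℤ) - 1 := by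
      have : (r:ℤ) + 1 ≤ (k:ℤ) := by exact_mod_cast hr
      push_cast
      linarith
    have h := htrace n ⟨i, by omega⟩ ((i*N + r : ℕ) : ℤ) (by simpa using hlo) (by simpa using hhi)
    have e1 : zit T ((i*N + r : ℕ) : ℤ) (x' n) = (⇑T)^[i*N + r] (x' n) := zit_natCast T _ _
    have e2 : zit T ((i*N + r : ℕ) : ℤ) (zit T (-((i * N : ℕ) : ℤ)) (xi i))
        = (⇑T)^[r] (xi i) := by
      rw [zit_add]
      have : ((i*N + r : ℕ) : ℤ) + -((i * N : ℕ) : ℤ) = ((r : ℕ) : ℤ) := by push_cast; ring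
      rw [this, zit_natCast]
    rw [e1, e2] at h
    simpa using h
  -- pointwise closeness of f values on blocks
  have hfb : ∀ (n i r : ℕ), i ≤ n → r < k →
      f ((⇑T)^[i*N + r] (x' n), (⇑S)^[i*N + r] y)
        ≤ f ((⇑T)^[r] (xi i), (⇑S)^[r] ((⇑S)^[i*N] y)) + ε := by
    intro n i r hi hr
    have h1 : (⇑S)^[r] ((⇑S)^[i*N] y) = (⇑S)^[i*N + r] y := by
      rw [← Function.iterate_add_apply, add_comm]
    rw [h1]
    exact hclose _ _ _ (htrace' n i r hi hr)
  -- block sums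
  have hblocksum : ∀ (n i : ℕ), i ≤ n →
      ∑ t ∈ Finset.range k, f ((⇑T)^[i*N + t] (x' n), (⇑S)^[i*N + t] y)
        ≤ k * (Δ + 2*ε) := by
    intro n i hi
    have h1 : ∑ t ∈ Finset.range k, f ((⇑T)^[i*N + t] (x' n), (⇑S)^[i*N + t] y)
        ≤ ∑ t ∈ Finset.range k, (f ((⇑T)^[t] (xi i), (⇑S)^[t] ((⇑S)^[i*N] y)) + ε) :=
      Finset.sum_le_sum fun t ht => hfb n i t hi (Finset.mem_range.1 ht)
    have h2 : ∑ t ∈ Finset.range k, f ((⇑T)^[t] (xi i), (⇑S)^[t] ((⇑S)^[i*N] y))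
        = k * birk2 (⇑T) (⇑S) f k (xi i) ((⇑S)^[i*N] y) := by
      rw [birk2_apply]
      have : (k:ℝ) ≠ 0 := by positivity
      field_simp
    have h3 : (k:ℝ) * birk2 (⇑T) (⇑S) f k (xi i) ((⇑S)^[i*N] y) ≤ k * (Δ + ε) := by
      have hk0 : (0:ℝ) ≤ k := by positivity
      exact mul_le_mul_of_nonneg_left (hxi i).le hk0
    calc ∑ t ∈ Finset.range k, f ((⇑T)^[i*N + t] (x' n), (⇑S)^[i*N + t] y)
        ≤ ∑ t ∈ Finset.range k, (f ((⇑T)^[t] (xi i), (⇑S)^[t] ((⇑S)^[i*N] y)) + ε) := h1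
      _ = k * birk2 (⇑T) (⇑S) f k (xi i) ((⇑S)^[i*N] y) + k * ε := by
          rw [Finset.sum_add_distrib, h2, Finset.sum_const, Finset.card_range,
            nsmul_eq_mul]
      _ ≤ k * (Δ + ε) + k * ε := by linarith
      _ = k * (Δ + 2*ε) := by ring
  -- full block (with gap) sums
  have hNblock : ∀ (n i : ℕ), i ≤ n →
      ∑ t ∈ Finset.range N, f ((⇑T)^[i*N + t] (x' n), (⇑S)^[i*N + t] y)
        ≤ k * (Δ + 2*ε) + D * C := by
    intro n i hi
    have hsplit : ∑ t ∈ Finset.range N, f ((⇑T)^[i*N + t] (x' n), (⇑S)^[i*N + t] y)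
        = (∑ t ∈ Finset.range k, f ((⇑T)^[i*N + t] (x' n), (⇑S)^[i*N + t] y))
          + ∑ s ∈ Finset.range D, f ((⇑T)^[i*N + (k + s)] (x' n), (⇑S)^[i*N + (k + s)] y) := by
      have h0 := Finset.sum_range_add (fun t => f ((⇑T)^[i*N + t] (x' n), (⇑S)^[i*N + t] y)) k D
      rw [← hNdef] at h0
      exact h0
    rw [hsplit]
    have hgap : ∑ s ∈ Finset.range D, f ((⇑T)^[i*N + (k + s)] (x' n), (⇑S)^[i*N + (k + s)] y)
        ≤ D * C := by
      calc ∑ s ∈ Finset.range D, f ((⇑T)^[i*N + (k + s)] (x' n), (⇑S)^[i*N + (k + s)] y)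
          ≤ ∑ s ∈ Finset.range D, C :=
            Finset.sum_le_sum fun s _ => (le_abs_self _).trans (hC _)
        _ = D * C := by rw [Finset.sum_const, Finset.card_range, nsmul_eq_mul]
    linarith [hblocksum n i hi]
  -- cumulative sums
  have hg : ∀ (n m : ℕ), m ≤ n + 1 →
      ∑ j ∈ Finset.range (m*N), f ((⇑T)^[j] (x' n), (⇑S)^[j] y)
        ≤ m * (k * (Δ + 2*ε) + D * C) := by
    intro n m
    induction m with
    | zero => simp
    | succ m ih =>
      intro hm
      have h1 : (m+1)*N = m*N + N := by ring
      rw [h1, Finset.sum_range_add]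
      have h2 := ih (by omega)
      have h3 := hNblock n m (by omega)
      have hcast : ((m+1 : ℕ):ℝ) = (m:ℝ) + 1 := by push_cast; ring
      rw [hcast]
      have h4 : ∑ x_1 ∈ Finset.range N, f ((⇑T)^[m * N + x_1] (x' n), (⇑S)^[m * N + x_1] y)
          ≤ k * (Δ + 2*ε) + D * C := h3
      linarith [h2, h4]
  -- Cantor intersection: a single point good for all m
  obtain ⟨bb, hbbdef⟩ : ∃ bb : ℝ, bb = k * (Δ + 2*ε) + D * C := ⟨_, rfl⟩
  set g : ℕ → X → ℝ := fun m x => ∑ j ∈ Finset.range (m*N), f ((⇑T)^[j] x, (⇑S)^[j] y)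
    with hgdef
  have hgcont : ∀ m : ℕ, Continuous (g m) := by
    intro m
    refine continuous_finset_sum _ fun j _ => ?_
    exact hf.comp ((T.continuous.iterate j).prodMk continuous_const)
  set Ks : ℕ → Set X := fun n => {x | ∀ m ≤ n, g m x ≤ m * bb} with hKsdef
  have hKclosed : ∀ n, IsClosed (Ks n) := by
    intro n
    have : Ks n = ⋂ (m : ℕ) (_ : m ≤ n), {x | g m x ≤ m * bb} := by
      ext x
      simp [hKsdef]
    rw [this]
    exact isClosed_iInter fun m => isClosed_iInter fun _ =>
      isClosed_le (hgcont m) continuous_const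
  have hKne : ∀ n, (Ks n).Nonempty := by
    intro n
    refine ⟨x' n, fun m hm => ?_⟩
    rw [hbbdef]
    exact hg n m (by omega)
  have hKdec : ∀ n, Ks (n+1) ⊆ Ks n := by
    intro n x hx m hm
    exact hx m (by omega)
  obtain ⟨xs, hxs⟩ := IsCompact.nonempty_iInter_of_sequence_nonempty_isCompact_isClosed
    Ks hKdec hKne ((hKclosed 0).isCompact) hKclosed
  have hstar : ∀ m : ℕ, g m xs ≤ m * bb := by
    intro m
    have := Set.mem_iInter.1 hxs m
    exact this m le_rfl
  -- bounds on B
  obtain ⟨B, hBdef⟩ : ∃ B : ℝ, B = bb / N := ⟨_, rfl⟩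
  have hbbNB : bb = N * B := by
    rw [hBdef]
    field_simp
  have hBabs : |B| ≤ 4 * C := by
    rw [abs_le]
    constructor
    · rw [hBdef, le_div_iff₀ hNR, hbbdef, hNcast]
      have hk0 : (0:ℝ) ≤ k := by positivity
      have hD0 : (0:ℝ) ≤ D := by positivity
      have h2 : (k:ℝ) * (-C) ≤ k * (Δ + 2*ε) :=
        mul_le_mul_of_nonneg_left (by linarith [hdelta_ge, hε.le]) hk0
      have hCk : (0:ℝ) ≤ C * k := mul_nonneg hCpos.le hk0
      have hCD : (0:ℝ) ≤ C * D := mul_nonneg hCpos.le hD0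
      have hDC : (0:ℝ) ≤ D * C := mul_nonneg hD0 hCpos.le
      linarith only [h2, hCk, hCD, hDC]
    · rw [hBdef, div_le_iff₀ hNR, hbbdef, hNcast]
      have hk0 : (0:ℝ) ≤ k := by positivity
      have hD0 : (0:ℝ) ≤ D := by positivity
      have h2 : (k:ℝ) * (Δ + 2*ε) ≤ k * (3*C) :=
        mul_le_mul_of_nonneg_left (by linarith [hΔleC, hεC]) hk0
      have hCk : (0:ℝ) ≤ C * k := mul_nonneg hCpos.le hk0
      have hCD : (0:ℝ) ≤ C * D := mul_nonneg hCpos.le hD0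
      linarith only [h2, hCk, hCD]
  have hBle : B ≤ Δ + 3*ε := by
    rw [hBdef, div_le_iff₀ hNR, hbbdef, hNcast]
    have hk0 : (0:ℝ) ≤ k := by positivity
    have hD0 : (0:ℝ) ≤ D := by positivity
    have hεN : ε * N = ε * k + ε * D := by rw [hNcast]; ring
    have h1 : ε * D ≤ C * D := mul_le_mul_of_nonneg_right hεC hD0
    have hkε : 4 * (C * D) ≤ ε * k := by linarith [h5CD, hεN ▸ h5CD, h1, hεN]
    have hDΔ : (D:ℝ) * (-C) ≤ D * Δ := mul_le_mul_of_nonneg_left hdelta_ge hD0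
    have hDε : (0:ℝ) ≤ D * ε := mul_nonneg hD0 hε.le
    have hCD : (0:ℝ) ≤ C * D := mul_nonneg hCpos.le hD0
    linarith only [hkε, hDΔ, hDε, hCD]
  -- interpolation: upper bound on all Birkhoff averages of xs
  have hup : ∀ j : ℕ, 1 ≤ j → birk2 (⇑T) (⇑S) f j xs y ≤ B + (5*C*N)/j := by
    intro j hj
    obtain ⟨m, hmN, hjm⟩ : ∃ m : ℕ, m * N ≤ j ∧ j - m * N < N := by
      refine ⟨j / N, Nat.div_mul_le_self j N, ?_⟩
      have h1 := Nat.div_add_mod j N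
      have h2 := Nat.mod_lt j hN_pos
      rw [mul_comm]
      generalize hq : N * (j / N) = p at h1 ⊢
      generalize hr : j % N = r at h1 h2
      omega
    have hsplit : ∑ i ∈ Finset.range j, f ((⇑T)^[i] xs, (⇑S)^[i] y)
        = g m xs + ∑ t ∈ Finset.range (j - m*N), f ((⇑T)^[m*N + t] xs, (⇑S)^[m*N + t] y) := by
      rw [hgdef]
      simp only
      rw [← Finset.sum_range_add (fun i => f ((⇑T)^[i] xs, (⇑S)^[i] y)) (m*N) (j - m*N)]
      congr 1
      exact congrArg Finset.range (Nat.add_sub_cancel' hmN).symm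
    have htail : ∑ t ∈ Finset.range (j - m*N), f ((⇑T)^[m*N + t] xs, (⇑S)^[m*N + t] y)
        ≤ N * C := by
      calc ∑ t ∈ Finset.range (j - m*N), f ((⇑T)^[m*N + t] xs, (⇑S)^[m*N + t] y)
          ≤ ∑ t ∈ Finset.range (j - m*N), C :=
            Finset.sum_le_sum fun t _ => (le_abs_self _).trans (hC _)
        _ = (j - m*N : ℕ) * C := by rw [Finset.sum_const, Finset.card_range, nsmul_eq_mul]
        _ ≤ N * C := by
            have h6 : ((j - m*N : ℕ) : ℝ) ≤ N := by exact_mod_cast hjm.le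
            exact mul_le_mul_of_nonneg_right h6 hCpos.le
    have hmB : (m : ℝ) * bb ≤ j * B + N * |B| := by
      rw [hbbNB]
      have h1 : (m : ℝ) * (N * B) = (m*N : ℕ) * B := by push_cast; ring
      rw [h1]
      have h2 : ((m*N : ℕ) : ℝ) ≤ (j:ℝ) := by exact_mod_cast hmN
      have h3 : (j:ℝ) - ((m*N : ℕ) : ℝ) ≤ (N:ℝ) := by
        have : j - m*N ≤ N := hjm.le
        have h4 : ((j - m*N : ℕ) : ℝ) = (j:ℝ) - ((m*N:ℕ):ℝ) := by
          have : m*N ≤ j := hmN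
          push_cast [Nat.cast_sub this]
          ring
        rw [← h4]
        exact_mod_cast hjm.le
      have p1 : ((j:ℝ) - ((m*N : ℕ):ℝ)) * (-B) ≤ ((j:ℝ) - ((m*N : ℕ):ℝ)) * |B| :=
        mul_le_mul_of_nonneg_left (neg_le_abs B) (by linarith)
      have p2 : ((j:ℝ) - ((m*N : ℕ):ℝ)) * |B| ≤ (N:ℝ) * |B| :=
        mul_le_mul_of_nonneg_right h3 (abs_nonneg B)
      linarith only [p1, p2, h2]
    have hsum : ∑ i ∈ Finset.range j, f ((⇑T)^[i] xs, (⇑S)^[i] y)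
        ≤ j * B + 5 * C * N := by
      have h0 := hstar m
      have h5 : (N:ℝ) * |B| ≤ N * (4*C) := mul_le_mul_of_nonneg_left hBabs hNR.le
      calc ∑ i ∈ Finset.range j, f ((⇑T)^[i] xs, (⇑S)^[i] y)
          = g m xs + ∑ t ∈ Finset.range (j - m*N), f ((⇑T)^[m*N + t] xs, (⇑S)^[m*N + t] y) :=
            hsplit
        _ ≤ m * bb + N * C := by linarith
        _ ≤ (j * B + N * |B|) + N * C := by linarith
        _ ≤ j * B + 5 * C * N := by linarith [h5]
    rw [birk2_apply]
    have hjR : (0:ℝ) < j := by exact_mod_cast hj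
    calc (j:ℝ)⁻¹ * ∑ i ∈ Finset.range j, f ((⇑T)^[i] xs, (⇑S)^[i] y)
        ≤ (j:ℝ)⁻¹ * (j * B + 5 * C * N) := by
          apply mul_le_mul_of_nonneg_left hsum
          positivity
      _ = B + (5*C*N)/j := by field_simp
  -- conclusion
  obtain ⟨J, hJ⟩ := exists_nat_gt (5*C*N/ε)
  have hev : ∀ j ≥ max J 1, birk2 (⇑T) (⇑S) f j xs y ≤ B + ε := by
    intro j hj
    have hj1 : 1 ≤ j := le_trans (le_max_right _ _) hj
    refine (hup j hj1).trans ?_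
    have hjR : (0:ℝ) < j := by exact_mod_cast hj1
    have hJj : (J:ℝ) ≤ j := by exact_mod_cast le_trans (le_max_left _ _) hj
    have h1 : 5*C*N/ε < (j:ℝ) := lt_of_lt_of_le hJ hJj
    have h2 : (5*C*N)/j ≤ ε := by
      rw [div_le_iff₀ hjR]
      rw [div_lt_iff₀ hε] at h1
      linarith only [h1]
    linarith
  have hlim : limsup (fun j : ℕ => birk2 (⇑T) (⇑S) f j xs y) atTop ≤ B + ε :=
    limsup_le_of_le (hCobdd xs y) (eventually_atTop.2 ⟨max J 1, hev⟩)
  have hxy := hy xs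
  have hGΔ : G - Δ = 8*ε := by rw [hεdef]; ring
  linarith [hBle]

end
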